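/- Let n ≥ 3, let e be an integer with e ∉ {−1, 0, 1}, and let p be a prime divisor of n such that p divides e^(n/p) − 1 (as integers) and gcd(n/p, eⁿ − 1) = 1. Let α ∈ Sₙ be a cyclic permutation of length n. Then the power conjugate equation (e*α) has a non-trivial solution, and for every non-trivial solution y ≠ 1 of (e*α): y^p = 1, and every solution z ∈ Sₙ of (e*α) is of the form z = y^k for some 1 ≤ k ≤ p; that is, the solutions of (e*α) are exactly the p distinct powers y, y², …, y^(p−1), y^p = 1. -/

import Mathlib

open Equiv Equiv.Perm Finset

lemma aux_pow_mod {G : Type*} [Monoid G] (w : G) (p : ℕ) (hw : w ^ p = 1) (a : ℕ) :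
    w ^ a = w ^ (a % p) := by
  conv_lhs => rw [← Nat.div_add_mod a p]
  rw [pow_add, pow_mul, hw, one_pow, one_mul]

lemma aux_pow_mod_eq {G : Type*} [Monoid G] (w : G) (p : ℕ) (hw : w ^ p = 1) {a b : ℕ}
    (h : a % p = b % p) : w ^ a = w ^ b := by
  rw [aux_pow_mod w p hw a, aux_pow_mod w p hw b, h]

lemma aux_zpow_mod {G : Type*} [Group G] (w : G) (p : ℕ) (hp : 0 < p) (hw : w ^ p = 1) (a : ℤ) :
    w ^ a = w ^ (a % (p : ℤ)).toNat := by
  have hp' : (0:ℤ) < (p:ℤ) := by exact_mod_cast hp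
  conv_lhs => rw [← Int.mul_ediv_add_emod a (p : ℤ)]
  rw [zpow_add, zpow_mul, zpow_natCast, hw, one_zpow, one_mul,
    ← zpow_natCast, Int.toNat_of_nonneg (Int.emod_nonneg a hp'.ne')]

section CC
variable {n : ℕ}

def cc (n : ℕ) : Equiv.Perm (ZMod n) := Equiv.addRight 1

lemma cc_apply (x : ZMod n) : cc n x = x + 1 := rfl

lemma cc_inv_apply (x : ZMod n) : (cc n)⁻¹ x = x - 1 := by
  simp [cc, Equiv.Perm.inv_def, sub_eq_add_neg]

lemma cc_pow_apply (k : ℕ) (x : ZMod n) : (cc n ^ k) x = x + k := by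
  induction k with
  | zero => simp
  | succ k ih => rw [pow_succ', Equiv.Perm.mul_apply, ih, cc_apply]; push_cast; ring

lemma cc_pow_n [NeZero n] : cc n ^ n = 1 := by
  ext x
  rw [cc_pow_apply, ZMod.natCast_self, add_zero, Equiv.Perm.one_apply]

lemma cc_isCycle [NeZero n] (hn : 1 < n) : (cc n).IsCycle := by
  haveI : Fact (1 < n) := ⟨hn⟩
  refine ⟨0, by simp [cc_apply], fun y hy => ⟨(y.val : ℤ), ?_⟩⟩
  rw [zpow_natCast, cc_pow_apply, zero_add, ZMod.natCast_rightInverse y]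

lemma cc_support [NeZero n] (hn : 1 < n) : (cc n).support = Finset.univ := by
  haveI : Fact (1 < n) := ⟨hn⟩
  ext x
  simp only [Equiv.Perm.mem_support, Finset.mem_univ, iff_true, cc_apply]
  intro h
  have h1 : (1 : ZMod n) = 0 := by
    have := congrArg (fun t => t - x) h
    simpa using this
  exact one_ne_zero h1

lemma cc_support_card [NeZero n] (hn : 1 < n) : (cc n).support.card = n := by
  rw [cc_support hn, Finset.card_univ, ZMod.card]

end CC

/-- embedding of `ZMod p` into `ZMod n` as the subgroup of multiples of `n/p` -/
def iot (n p : ℕ) (a : ZMod p) : ZMod n := ((n / p * a.val : ℕ) : ZMod n)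

/-- the "cocycle" function -/
def gfun (n p : ℕ) (e : ℤ) (x : ZMod n) : ZMod p := (e : ZMod p)⁻¹ ^ x.val

theorem core (n : ℕ) (hn : 3 ≤ n) (e : ℤ)
    (p : ℕ) (hp : p.Prime) (hpn : p ∣ n)
    (hdvd : (p : ℤ) ∣ e ^ (n / p) - 1)
    (hgcd : Int.gcd ((n / p : ℕ) : ℤ) (e ^ n - 1) = 1) :
    (∃ y : Equiv.Perm (ZMod n), y ≠ 1 ∧ cc n * y * (cc n)⁻¹ = y ^ e) ∧
    ∀ y, y ≠ 1 → cc n * y * (cc n)⁻¹ = y ^ e →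
      y ^ p = 1 ∧ (∀ i j : ℕ, 1 ≤ i → i < j → j ≤ p → y ^ i ≠ y ^ j) ∧
      (∀ z, cc n * z * (cc n)⁻¹ = z ^ e → ∃ k : ℕ, 1 ≤ k ∧ k ≤ p ∧ z = y ^ k) := by
  haveI : NeZero n := ⟨by omega⟩
  haveI : Fact (1 < n) := ⟨by omega⟩
  haveI hpF : Fact p.Prime := ⟨hp⟩
  set m : ℕ := n / p with hm
  have hp1 : 1 < p := hp.one_lt
  have hmp : m * p = n := Nat.div_mul_cancel hpn
  have hm1 : 1 ≤ m := by
    rcases Nat.eq_zero_or_pos m with h | h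
    · rw [h, zero_mul] at hmp; omega
    · exact h
  have hmn : m < n := by nlinarith
  have hmdvd : m ∣ n := ⟨p, hmp.symm⟩
  -- the element U = e mod p and its properties
  set U : ZMod p := (e : ZMod p) with hU
  have hUm : U ^ m = 1 := by
    have h0 : ((e ^ m - 1 : ℤ) : ZMod p) = 0 := by
      rw [ZMod.intCast_zmod_eq_zero_iff_dvd]; exact hdvd
    push_cast at h0
    linear_combination h0
  have hUne : U ≠ 0 := by
    intro h
    rw [h, zero_pow (by omega)] at hUm
    exact zero_ne_one hUm
  have hVm : (U⁻¹) ^ m = 1 := by rw [inv_pow, hUm, inv_one]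
  have hUV : U * U⁻¹ = 1 := mul_inv_cancel₀ hUne
  -- iota lemmas
  have iot_def : ∀ a : ZMod p, iot n p a = ((m * a.val : ℕ) : ZMod n) := fun a => rfl
  have L1 : ∀ a b : ℕ, a % p = b % p → ((m * a : ℕ) : ZMod n) = ((m * b : ℕ) : ZMod n) := by
    intro a b h
    rw [ZMod.natCast_eq_natCast_iff]
    have h2 : Nat.ModEq (m * p) (m * a) (m * b) := Nat.ModEq.mul_left' m h
    rwa [hmp] at h2
  have iota_add : ∀ a b : ZMod p, iot n p (a + b) = iot n p a + iot n p b := by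
    intro a b
    rw [iot_def, iot_def, iot_def, ← Nat.cast_add, ← Nat.mul_add]
    refine L1 _ _ ?_
    rw [ZMod.val_add]
    exact Nat.mod_mod_of_dvd _ dvd_rfl
  have iota_zero : iot n p 0 = 0 := by
    rw [iot_def]; simp
  have iota_neg : ∀ a : ZMod p, iot n p (-a) = - iot n p a := by
    intro a
    have := iota_add a (-a)
    rw [add_neg_cancel, iota_zero] at this
    exact eq_neg_of_add_eq_zero_right this.symm
  have iota_val_lt : ∀ a : ZMod p, m * a.val < n := by
    intro a
    have := ZMod.val_lt a
    calc m * a.val < m * p :=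
          Nat.mul_lt_mul_of_le_of_lt le_rfl (ZMod.val_lt a) (by omega)
      _ = n := hmp
  have iota_inj : ∀ a b : ZMod p, iot n p a = iot n p b → a = b := by
    intro a b h
    rw [iot_def, iot_def] at h
    have h2 : m * a.val = m * b.val := by
      have ha := iota_val_lt a
      have hb := iota_val_lt b
      have := (ZMod.natCast_eq_natCast_iff' _ _ _).mp h
      rwa [Nat.mod_eq_of_lt ha, Nat.mod_eq_of_lt hb] at this
    have : a.val = b.val := Nat.eq_of_mul_eq_mul_left (by omega) h2
    exact ZMod.val_injective _ this
  have iota_nsmul : ∀ (s : ℕ) (a : ZMod p), s • iot n p a = iot n p ((s : ZMod p) * a) := by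
    intro s a
    induction s with
    | zero => simp [iota_zero]
    | succ s ih =>
      rw [succ_nsmul, ih, ← iota_add]
      congr 1
      push_cast
      ring
  -- values of iota are multiples of m
  have iota_val_dvd : ∀ a : ZMod p, m ∣ (iot n p a).val := by
    intro a
    rw [iot_def, ZMod.val_natCast]
    exact (Nat.dvd_mod_iff hmdvd).mpr ⟨a.val, rfl⟩
  have val_add_mod : ∀ x w : ZMod n, m ∣ w.val → (x + w).val % m = x.val % m := by
    intro x w hw
    obtain ⟨t, ht⟩ := hw
    rw [ZMod.val_add, Nat.mod_mod_of_dvd _ hmdvd, ht, Nat.add_mul_mod_self_left]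
  -- g lemmas
  have g_eq : ∀ a b : ℕ, a % m = b % m → U⁻¹ ^ a = U⁻¹ ^ b := fun a b h =>
    aux_pow_mod_eq _ m hVm h
  have g_shift : ∀ (x w : ZMod n), m ∣ w.val → gfun n p e (x + w) = gfun n p e x :=
    fun x w hw => g_eq _ _ (val_add_mod x w hw)
  have g_add_one : ∀ x : ZMod n, gfun n p e (x + 1) = gfun n p e x * U⁻¹ := by
    intro x
    show U⁻¹ ^ (x + 1).val = U⁻¹ ^ x.val * U⁻¹
    rw [← pow_succ]
    refine g_eq _ _ ?_
    rw [ZMod.val_add, ZMod.val_one, Nat.mod_mod_of_dvd _ hmdvd]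
  have g_sub_one : ∀ x : ZMod n, gfun n p e (x - 1) = gfun n p e x * U := by
    intro x
    have h1 := g_add_one (x - 1)
    rw [sub_add_cancel] at h1
    rw [h1, mul_assoc, inv_mul_cancel₀ hUne, mul_one]
  -- construction of the fundamental solution
  have hy_ex : ∃ y : Equiv.Perm (ZMod n), ∀ x, y x = x + iot n p (gfun n p e x) := by
    refine ⟨⟨fun x => x + iot n p (gfun n p e x), fun x => x - iot n p (gfun n p e x),
      ?_, ?_⟩, fun x => rfl⟩
    · intro x
      simp only
      rw [g_shift _ _ (iota_val_dvd _)]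
      ring
    · intro x
      simp only
      have h1 : x - iot n p (gfun n p e x) = x + iot n p (-(gfun n p e x)) := by
        rw [iota_neg]; ring
      rw [h1, g_shift _ _ (iota_val_dvd _), ← h1]
      ring
  obtain ⟨y, hy⟩ := hy_ex
  have ypow : ∀ (k : ℕ) (x : ZMod n), (y ^ k) x = x + iot n p ((k : ZMod p) * gfun n p e x) := by
    intro k
    induction k with
    | zero => intro x; simp [iota_zero]
    | succ k ih =>
      intro x
      rw [pow_succ, Equiv.Perm.mul_apply, ih, hy, g_shift _ _ (iota_val_dvd _), add_assoc,
        ← iota_add]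
      congr 2
      push_cast
      ring
  have hy1 : y ≠ 1 := by
    intro h
    have h0 : y 0 = 0 := by rw [h]; rfl
    rw [hy] at h0
    simp only [zero_add] at h0
    have : gfun n p e 0 = 1 := by
      show U⁻¹ ^ (0 : ZMod n).val = 1
      rw [ZMod.val_zero, pow_zero]
    rw [this, iot_def] at h0
    have hv1 : (1 : ZMod p).val = 1 := ZMod.val_one p
    rw [hv1, mul_one] at h0
    have := (ZMod.natCast_eq_zero_iff m n).mp h0
    have := Nat.le_of_dvd (by omega) this
    omega
  have hyp : y ^ p = 1 := by
    ext x
    rw [ypow p x, ZMod.natCast_self, zero_mul, iota_zero, add_zero, Equiv.Perm.one_apply]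
  have hppos : 0 < p := by omega
  set r : ℕ := (e % (p : ℤ)).toNat with hr
  have hrcast : ((r : ℕ) : ZMod p) = U := by
    rw [hr]
    have h1 : (((e % (p : ℤ)).toNat : ℕ) : ℤ) = e % (p : ℤ) :=
      Int.toNat_of_nonneg (Int.emod_nonneg e (by exact_mod_cast hppos.ne'))
    have h2 : (((e % (p : ℤ)).toNat : ℕ) : ZMod p) = ((e % (p:ℤ) : ℤ) : ZMod p) := by
      rw [← h1]; push_cast; rfl
    rw [h2, ZMod.intCast_mod]
  have hysol : cc n * y * (cc n)⁻¹ = y ^ e := by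
    rw [aux_zpow_mod y p hppos hyp e, ← hr]
    ext x
    rw [Equiv.Perm.mul_apply, Equiv.Perm.mul_apply, cc_inv_apply, hy, cc_apply, ypow r x,
      g_sub_one, hrcast]
    ring
  -- helper : m divides vals add
  have hvadd : ∀ a b : ZMod n, m ∣ a.val → m ∣ b.val → m ∣ (a + b).val := by
    intro a b ha hb
    rw [ZMod.val_add]
    exact (Nat.dvd_mod_iff hmdvd).mpr (Nat.dvd_add ha hb)
  -- classification of all nontrivial solutions
  have classify : ∀ z : Equiv.Perm (ZMod n), cc n * z * (cc n)⁻¹ = z ^ e → z ≠ 1 →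
      ∃ a : ZMod p, a ≠ 0 ∧ z = y ^ a.val := by
    intro z hz hz1
    have S1 : ∀ k : ℕ, z ^ (e ^ k) = (cc n) ^ k * z * ((cc n) ^ k)⁻¹ := by
      intro k
      induction k with
      | zero => simp
      | succ k ih =>
        rw [pow_succ e, mul_comm (e ^ k) e, zpow_mul, ← hz, conj_zpow, ih, pow_succ' (cc n)]
        group
    have hzen : z ^ ((e ^ n - 1 : ℤ)) = 1 := by
      have h := S1 n
      rw [cc_pow_n] at h
      simp only [one_mul, inv_one, mul_one] at h
      rw [zpow_sub, h, zpow_one, mul_inv_cancel]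
    set N : ℕ := (e ^ n - 1).natAbs with hN
    have hzN : z ^ N = 1 := by
      rcases Int.natAbs_eq (e ^ n - 1) with h | h
      · rw [← zpow_natCast, ← h, hzen]
      · rw [← zpow_natCast]
        have : ((N : ℤ)) = -(e ^ n - 1) := by omega
        rw [this, zpow_neg, hzen, inv_one]
    have hdN : orderOf z ∣ N := orderOf_dvd_of_pow_eq_one hzN
    have hcop : Nat.Coprime m N := by
      have : (↑m : ℤ).natAbs.gcd (e ^ n - 1).natAbs = 1 := hgcd
      simpa [Int.natAbs_natCast] using this
    -- full support
    have hsupp_map : z.support.map (cc n).toEmbedding ⊆ z.support := by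
      rw [← Equiv.Perm.support_conj, hz]
      exact Equiv.Perm.support_zpow_le z e
    have hsupp_eq : z.support.map (cc n).toEmbedding = z.support :=
      Finset.eq_of_subset_of_card_le hsupp_map (by rw [Finset.card_map])
    have hmem_shift : ∀ x : ZMod n, x ∈ z.support → x + 1 ∈ z.support := by
      intro x hx
      rw [← hsupp_eq]
      exact Finset.mem_map_of_mem _ hx
    have hfull : ∀ x : ZMod n, x ∈ z.support := by
      obtain ⟨x₀, hx₀⟩ : ∃ x, x ∈ z.support := by
        by_contra h
        push_neg at h
        exact hz1 (Equiv.Perm.support_eq_empty_iff.mp (Finset.eq_empty_iff_forall_notMem.mpr h))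
      have hstep : ∀ k : ℕ, x₀ + (k : ZMod n) ∈ z.support := by
        intro k
        induction k with
        | zero => simpa using hx₀
        | succ k ih =>
          have h2 := hmem_shift _ ih
          push_cast
          rw [← add_assoc]
          exact h2
      intro x
      have h3 := hstep ((x - x₀).val)
      rw [ZMod.natCast_rightInverse (x - x₀)] at h3
      have h4 : x₀ + (x - x₀) = x := by ring
      rwa [h4] at h3
    -- same-cycle relation is translation-invariant
    have SC1 : ∀ x w : ZMod n, z.SameCycle x w → z.SameCycle (x + 1) (w + 1) := by
      rintro x w ⟨j, hj⟩
      refine ⟨e * j, ?_⟩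
      rw [zpow_mul, ← hz, conj_zpow, Equiv.Perm.mul_apply, Equiv.Perm.mul_apply,
        cc_inv_apply, add_sub_cancel_right, hj, cc_apply]
    have SCk : ∀ (k : ℕ) (x w : ZMod n), z.SameCycle x w →
        z.SameCycle (x + (k : ZMod n)) (w + (k : ZMod n)) := by
      intro k
      induction k with
      | zero => intro x w h; simpa using h
      | succ k ih =>
        intro x w h
        push_cast
        rw [← add_assoc, ← add_assoc]
        exact SC1 _ _ (ih _ _ h)
    have SCshift : ∀ (a x w : ZMod n), z.SameCycle x w → z.SameCycle (x + a) (w + a) := by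
      intro a x w h
      have h2 := SCk a.val x w h
      rwa [ZMod.natCast_rightInverse a] at h2
    -- the orbit of 0 is a subgroup
    set O : AddSubgroup (ZMod n) :=
      { carrier := {w | z.SameCycle 0 w}
        zero_mem' := ⟨0, by simp⟩
        add_mem' := by
          rintro a b ha hb
          have h2 := SCshift a 0 b hb
          rw [zero_add] at h2
          exact ha.trans (h2.trans (by rw [add_comm]))
        neg_mem' := by
          rintro a ha
          have h2 := SCshift (-a) 0 a ha
          rw [zero_add, add_neg_cancel] at h2
          exact h2.symm } with hO
    have hOmem : ∀ v : ZMod n, v ∈ O ↔ z.SameCycle 0 v := fun v => Iff.rfl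
    have h0supp : (0 : ZMod n) ∈ z.support := hfull 0
    have hz0 : z 0 ≠ 0 := Equiv.Perm.mem_support.mp h0supp
    have hOset : (O : Set (ZMod n)) = ↑((z.cycleOf 0).support) := by
      ext v
      simp only [Finset.coe_sort_coe, Finset.mem_coe, Equiv.Perm.mem_support_cycleOf_iff]
      constructor
      · intro h; exact ⟨h, h0supp⟩
      · intro h; exact h.1
    set L : ℕ := (z.cycleOf 0).support.card with hL
    have hcardO : Nat.card O = L := by
      have h1 : Nat.card O = (O : Set (ZMod n)).ncard := by
        rw [← Nat.card_coe_set_eq]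
        rfl
      rw [h1, hOset, Set.ncard_coe_finset]
    have hcyc := Equiv.Perm.isCycle_cycleOf z hz0
    have hLd : L ∣ orderOf z := by
      have h1 : ((z.cycleOf 0) ^ (orderOf z)) 0 = 0 := by
        rw [Equiv.Perm.cycleOf_pow_apply_self, pow_orderOf_eq_one]
        rfl
      have h2 : (z.cycleOf 0) 0 ≠ 0 := by
        rw [Equiv.Perm.cycleOf_apply_self]; exact hz0
      have h3 : (z.cycleOf 0) ^ (orderOf z) = 1 := (hcyc.pow_eq_one_iff' h2).mpr h1
      have h4 := orderOf_dvd_of_pow_eq_one h3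
      rwa [hcyc.orderOf] at h4
    have hLm : Nat.Coprime L m := Nat.Coprime.coprime_dvd_left (hLd.trans hdN) hcop.symm
    have hLn : L ∣ n := by
      have h1 := AddSubgroup.card_addSubgroup_dvd_card O
      rwa [hcardO, Nat.card_zmod] at h1
    have hLp : L ∣ p := by
      refine Nat.Coprime.dvd_of_dvd_mul_right hLm ?_
      rw [mul_comm p m, hmp]
      exact hLn
    have hL2 : 2 ≤ L := Equiv.Perm.two_le_card_support_cycleOf_iff.mpr hz0
    have hLeq : L = p := ((Nat.Prime.eq_one_or_self_of_dvd hp L hLp)).resolve_left (by omega)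
    -- every cycle has length p
    have hcycx : ∀ x : ZMod n, (z.cycleOf x).support.card = p := by
      intro x
      have hset : ((z.cycleOf x).support : Set (ZMod n)) = (fun v => v + x) '' (O : Set (ZMod n)) := by
        ext v
        simp only [Finset.mem_coe, Equiv.Perm.mem_support_cycleOf_iff, Set.mem_image]
        constructor
        · rintro ⟨hsc, -⟩
          refine ⟨v - x, ?_, by ring⟩
          show z.SameCycle 0 (v - x)
          have h2 := SCshift (-x) x v hsc
          rw [add_neg_cancel] at h2
          rwa [← sub_eq_add_neg] at h2
        · rintro ⟨a, ha, rfl⟩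
          replace ha : z.SameCycle 0 a := ha
          refine ⟨?_, hfull x⟩
          show z.SameCycle x (a + x)
          have h2 := SCshift x 0 a ha
          rwa [zero_add] at h2
      have h4 := congrArg Set.ncard hset
      rw [Set.ncard_coe_finset, Set.ncard_image_of_injective _ (add_left_injective x)] at h4
      rw [h4, ← Nat.card_coe_set_eq]
      have h5 : Nat.card (O : Set (ZMod n)) = Nat.card O := rfl
      rw [h5, hcardO, hLeq]
    have hzp : z ^ p = 1 := by
      ext x
      have h1 := Equiv.Perm.pow_mod_card_support_cycleOf_self_apply z p x
      rw [hcycx x, Nat.mod_self, pow_zero] at h1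
      rw [← h1]
    -- the displacement w = z 0
    set w : ZMod n := z 0 with hwdef
    have hwO : w ∈ O := ⟨1, by simp [hwdef]⟩
    have hpw : p • w = 0 := by
      have h1 : (Nat.card O) • (⟨w, hwO⟩ : O) = 0 := card_nsmul_eq_zero'
      rw [hcardO, hLeq] at h1
      have h2 := congrArg O.subtype h1
      rw [map_nsmul] at h2
      simpa using h2
    have hmw : m ∣ w.val := by
      have h2 : ((p * w.val : ℕ) : ZMod n) = 0 := by
        have h3 : (p : ZMod n) * w = 0 := by
          rw [← nsmul_eq_mul]
          exact_mod_cast hpw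
        calc ((p * w.val : ℕ) : ZMod n) = (p : ZMod n) * ((w.val : ℕ) : ZMod n) := by push_cast; ring
          _ = (p : ZMod n) * w := by rw [ZMod.natCast_rightInverse w]
          _ = 0 := h3
      have h3 : n ∣ p * w.val := (ZMod.natCast_eq_zero_iff _ n).mp h2
      obtain ⟨t, ht⟩ := h3
      refine ⟨t, ?_⟩
      have h4 : p * w.val = p * (m * t) := by rw [ht, ← hmp]; ring
      exact Nat.eq_of_mul_eq_mul_left hppos h4
    -- pointwise power identities
    have A' : ∀ x : ZMod n, (z ^ ((e ^ x.val % (p : ℤ)).toNat)) x = x + w := by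
      intro x
      have h1 := S1 x.val
      have h2 : z ^ ((e ^ x.val % (p:ℤ)).toNat) = z ^ (e ^ x.val) :=
        (aux_zpow_mod z p hppos hzp _).symm
      rw [h2, h1, Equiv.Perm.mul_apply, Equiv.Perm.mul_apply]
      have h3 : ((cc n ^ x.val)⁻¹) x = 0 := by
        rw [Equiv.Perm.inv_eq_iff_eq, cc_pow_apply, zero_add]
        exact (ZMod.natCast_rightInverse x).symm
      rw [h3, ← hwdef, cc_pow_apply, ZMod.natCast_rightInverse x, add_comm]
    have B : ∀ (x a : ZMod n), m ∣ a.val →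
        (e ^ (x + a).val % (p:ℤ)).toNat = (e ^ x.val % (p:ℤ)).toNat := by
      intro x a ha
      have hUU : U ^ (x + a).val = U ^ x.val := aux_pow_mod_eq U m hUm (val_add_mod x a ha)
      have h1 : ((e ^ (x+a).val : ℤ) : ZMod p) = ((e ^ x.val : ℤ) : ZMod p) := by
        push_cast
        exact hUU
      have h2 := (ZMod.intCast_eq_intCast_iff' _ _ _).mp h1
      rw [h2]
    have hjw : ∀ j : ℕ, m ∣ (j • w).val := by
      intro j
      induction j with
      | zero => simp
      | succ j ih =>
        rw [succ_nsmul]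
        exact hvadd _ _ ih hmw
    have C : ∀ (j : ℕ) (x : ZMod n), ((z ^ ((e ^ x.val % (p:ℤ)).toNat)) ^ j) x = x + j • w := by
      intro j
      induction j with
      | zero => intro x; simp
      | succ j ih =>
        intro x
        rw [pow_succ', Equiv.Perm.mul_apply, ih x]
        have h1 := A' (x + j • w)
        rw [B x (j • w) (hjw j)] at h1
        rw [h1, succ_nsmul, add_assoc]
    have D : ∀ x : ZMod n, z x = x + ((U ^ x.val)⁻¹).val • w := by
      intro x
      set t : ℕ := (e ^ x.val % (p:ℤ)).toNat with htt
      set s : ℕ := ((U ^ x.val)⁻¹).val with hss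
      have htcast : ((t : ℕ) : ZMod p) = U ^ x.val := by
        have h1 : (((e ^ x.val % (p : ℤ)).toNat : ℕ) : ℤ) = e ^ x.val % (p : ℤ) :=
          Int.toNat_of_nonneg (Int.emod_nonneg _ (by exact_mod_cast hppos.ne'))
        have h2 : ((t : ℕ) : ZMod p) = ((e ^ x.val % (p:ℤ) : ℤ) : ZMod p) := by
          rw [htt, ← h1]
          push_cast
          rfl
        rw [h2, ZMod.intCast_mod]
        push_cast
        rfl
      have hts : (t * s) % p = 1 % p := by
        have h1 : ((t * s : ℕ) : ZMod p) = ((1 : ℕ) : ZMod p) := by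
          push_cast
          rw [htcast, hss, ZMod.natCast_rightInverse ((U ^ x.val)⁻¹)]
          exact mul_inv_cancel₀ (pow_ne_zero _ hUne)
        exact (ZMod.natCast_eq_natCast_iff' _ _ _).mp h1
      have h2 : z ^ (t * s) = z ^ 1 := aux_pow_mod_eq z p hzp hts
      have h3 : (z ^ (t * s)) x = x + s • w := by
        rw [pow_mul]
        exact C s x
      rw [← pow_one z, ← h2, h3]
    -- identify z as a power of y
    set a0 : ZMod p := ((w.val / m : ℕ) : ZMod p) with ha0
    have hwa : iot n p a0 = w := by
      rw [iot_def]
      have h1 : a0.val = w.val / m := by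
        rw [ha0, ZMod.val_natCast, Nat.mod_eq_of_lt]
        rw [Nat.div_lt_iff_lt_mul (by omega), mul_comm p m, hmp]
        exact ZMod.val_lt w
      rw [h1, Nat.mul_div_cancel' hmw, ZMod.natCast_rightInverse w]
    have hchar : ∀ x : ZMod n, z x = x + iot n p (gfun n p e x * a0) := by
      intro x
      rw [D x, ← hwa, iota_nsmul]
      congr 2
      rw [ZMod.natCast_rightInverse ((U ^ x.val)⁻¹), ← inv_pow]
      rfl
    have ha0ne : a0 ≠ 0 := by
      intro h
      apply hz1
      ext x
      rw [hchar x, h, mul_zero, iota_zero, add_zero, Equiv.Perm.one_apply]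
    refine ⟨a0, ha0ne, ?_⟩
    ext x
    rw [hchar x, ypow a0.val x, ZMod.natCast_rightInverse a0, mul_comm]
  refine ⟨⟨y, hy1, hysol⟩, ?_⟩
  intro Y hY1 hYsol
  obtain ⟨a, hane, hYa⟩ := classify Y hYsol hY1
  have hYp : Y ^ p = 1 := by rw [hYa, ← pow_mul, mul_comm, pow_mul, hyp, one_pow]
  have hordY : orderOf Y = p := orderOf_eq_prime hYp hY1
  refine ⟨hYp, ?_, ?_⟩
  · intro i j hi hij hjp hEq
    have h1 : Y ^ i * Y ^ (j - i) = Y ^ i * 1 := by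
      have hij' : i + (j - i) = j := by omega
      rw [← pow_add, hij', mul_one, ← hEq]
    have h2 : Y ^ (j - i) = 1 := mul_left_cancel h1
    have h3 : p ∣ (j - i) := by
      rw [← hordY]
      exact orderOf_dvd_of_pow_eq_one h2
    have h4 := Nat.le_of_dvd (by omega) h3
    omega
  · intro Z hZsol
    by_cases hZ1 : Z = 1
    · exact ⟨p, by omega, le_rfl, by rw [hZ1, hYp]⟩
    · obtain ⟨b, hbne, hZb⟩ := classify Z hZsol hZ1
      have hkne : (a⁻¹ * b) ≠ 0 := mul_ne_zero (inv_ne_zero hane) hbne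
      refine ⟨(a⁻¹ * b).val, ?_, le_of_lt (ZMod.val_lt _), ?_⟩
      · exact Nat.pos_of_ne_zero (fun h => hkne ((ZMod.val_eq_zero _).mp h))
      · rw [hZb, hYa, ← pow_mul]
        refine aux_pow_mod_eq y p hyp ?_
        apply (ZMod.natCast_eq_natCast_iff' _ _ _).mp
        push_cast
        rw [ZMod.natCast_rightInverse b, ZMod.natCast_rightInverse (a⁻¹ * b),
          ZMod.natCast_rightInverse a, ← mul_assoc, mul_inv_cancel₀ hane, one_mul]

/-- `Equiv.permCongr` as a multiplicative equivalence. -/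
def permCongrMulEquiv {α β : Type*} (ε : α ≃ β) : Equiv.Perm α ≃* Equiv.Perm β :=
  { Equiv.permCongr ε with
    map_mul' := fun σ τ => Equiv.ext fun x => by simp }

lemma permCongrMulEquiv_apply {α β : Type*} (ε : α ≃ β) (σ : Equiv.Perm α) (b : β) :
    permCongrMulEquiv ε σ b = ε (σ (ε.symm b)) := rfl

lemma isCycle_permCongr {α β : Type*} (ε : α ≃ β) {σ : Equiv.Perm α} (h : σ.IsCycle) :
    (permCongrMulEquiv ε σ).IsCycle := by
  obtain ⟨x, hx, hsc⟩ := h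
  refine ⟨ε x, ?_, ?_⟩
  · rw [permCongrMulEquiv_apply, Equiv.symm_apply_apply]
    intro hc
    exact hx (ε.injective hc)
  · intro b hb
    have hb' : σ (ε.symm b) ≠ ε.symm b := by
      intro hc
      apply hb
      rw [permCongrMulEquiv_apply, hc, Equiv.apply_symm_apply]
    obtain ⟨i, hi⟩ := hsc hb'
    refine ⟨i, ?_⟩
    rw [← map_zpow (permCongrMulEquiv ε), permCongrMulEquiv_apply, Equiv.symm_apply_apply,
      hi, Equiv.apply_symm_apply]

lemma support_permCongr {α β : Type*} [Fintype α] [DecidableEq α] [Fintype β] [DecidableEq β]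
    (ε : α ≃ β) (σ : Equiv.Perm α) :
    (permCongrMulEquiv ε σ).support = σ.support.map ε.toEmbedding := by
  ext b
  simp only [Equiv.Perm.mem_support, Finset.mem_map, Equiv.coe_toEmbedding,
    permCongrMulEquiv_apply]
  constructor
  · intro hb
    refine ⟨ε.symm b, ?_, by simp⟩
    intro hc
    exact hb (by rw [hc, Equiv.apply_symm_apply])
  · rintro ⟨a, ha, rfl⟩
    simp only [Equiv.symm_apply_apply]
    intro hc
    exact ha (ε.injective hc)


/-- Theorem 2.11: let `p` be a prime divisor of `n` with
`p ∣ e^(n/p) - 1` and `gcd(n/p, e^n - 1) = 1`, and let `α ∈ Sₙ` be cyclic of length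
`n ≥ 3`. Then `(e*α)` has a non-trivial solution and for every non-trivial solution
`y`: `y ^ p = 1`, the powers `y, y², …, y^p` are distinct, and every solution equals
`y ^ k` for some `1 ≤ k ≤ p`. -/
theorem stmt_12 (n : ℕ) (hn : 3 ≤ n) (e : ℤ) (he : e ∉ ({-1, 0, 1} : Set ℤ))
    (p : ℕ) (hp : p.Prime) (hpn : p ∣ n)
    (hdvd : (p : ℤ) ∣ e ^ (n / p) - 1)
    (hgcd : Int.gcd ((n / p : ℕ) : ℤ) (e ^ n - 1) = 1)
    (α : Equiv.Perm (Fin n)) (hα : α.IsCycle) (hcard : α.support.card = n) :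
    (∃ y : Equiv.Perm (Fin n), y ≠ 1 ∧ α * y * α⁻¹ = y ^ e) ∧
    ∀ y : Equiv.Perm (Fin n), y ≠ 1 → α * y * α⁻¹ = y ^ e →
      y ^ p = 1 ∧
      (∀ i j : ℕ, 1 ≤ i → i < j → j ≤ p → y ^ i ≠ y ^ j) ∧
      (∀ z : Equiv.Perm (Fin n), α * z * α⁻¹ = z ^ e →
        ∃ k : ℕ, 1 ≤ k ∧ k ≤ p ∧ z = y ^ k) := by
  haveI : NeZero n := ⟨by omega⟩
  have hcardeq : Fintype.card (Fin n) = Fintype.card (ZMod n) := by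
    rw [Fintype.card_fin, ZMod.card]
  set ε : Fin n ≃ ZMod n := Fintype.equivOfCardEq hcardeq with hε
  set Φ : Equiv.Perm (Fin n) ≃* Equiv.Perm (ZMod n) := permCongrMulEquiv ε with hΦ
  have hβcyc : (Φ α).IsCycle := isCycle_permCongr ε hα
  have hβcard : (Φ α).support.card = n := by
    rw [hΦ, support_permCongr, Finset.card_map, hcard]
  have hccyc : (cc n).IsCycle := cc_isCycle (by omega)
  have hconj : IsConj (Φ α) (cc n) :=
    hβcyc.isConj hccyc (by rw [hβcard, cc_support_card (by omega)])
  obtain ⟨g, hg⟩ := isConj_iff.mp hconj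
  set Ψ : Equiv.Perm (Fin n) ≃* Equiv.Perm (ZMod n) := Φ.trans (MulAut.conj g) with hΨ
  have hΨα : Ψ α = cc n := by
    rw [hΨ]
    simpa [MulAut.conj_apply] using hg
  have hsol_iff : ∀ σ : Equiv.Perm (Fin n),
      (α * σ * α⁻¹ = σ ^ e) ↔ (cc n * Ψ σ * (cc n)⁻¹ = (Ψ σ) ^ e) := by
    intro σ
    constructor
    · intro h
      have h2 := congrArg Ψ h
      rwa [map_mul, map_mul, map_inv, hΨα, map_zpow] at h2
    · intro h
      apply Ψ.injective
      rwa [map_mul, map_mul, map_inv, hΨα, map_zpow]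
  obtain ⟨⟨y0, hy01, hy0sol⟩, hmain⟩ := core n hn e p hp hpn hdvd hgcd
  constructor
  · refine ⟨Ψ.symm y0, ?_, ?_⟩
    · intro h
      apply hy01
      have h2 := congrArg Ψ h
      rwa [MulEquiv.apply_symm_apply, map_one] at h2
    · rw [hsol_iff, MulEquiv.apply_symm_apply]
      exact hy0sol
  · intro y hy1 hysol
    have hY1 : Ψ y ≠ 1 := by
      intro h
      apply hy1
      apply Ψ.injective
      rwa [map_one]
    obtain ⟨hYp, hdist, hall⟩ := hmain (Ψ y) hY1 ((hsol_iff y).mp hysol)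
    refine ⟨?_, ?_, ?_⟩
    · apply Ψ.injective
      rw [map_pow, map_one]
      exact hYp
    · intro i j hi hij hjp hEq
      exact hdist i j hi hij hjp (by rw [← map_pow, ← map_pow, hEq])
    · intro z hzsol
      obtain ⟨k, hk1, hkp, hzk⟩ := hall (Ψ z) ((hsol_iff z).mp hzsol)
      refine ⟨k, hk1, hkp, ?_⟩
      apply Ψ.injective
      rw [map_pow]
      exact hzk
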